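/- arXiv:0901.4480 — 5 statements merged into one kernel-verified Lean document; each statement's English description precedes it below -/
import Mathlib

section
/- Let A be a Keigher ring, i.e., a differential ring in which the radical of every differential ideal is a differential ideal. Then for every differential ideal I of A and every multiplicative set S disjoint from I, there exists a prime differential ideal containing I and disjoint from S which is maximal among differential ideals disjoint from S. -/
/-- In a Keigher ring, for every differential ideal `I` and multiplicative set `S`
disjoint from `I`, there exists a prime differential ideal containing `I`,
disjoint from `S`, and maximal among differential ideals disjoint from `S`. -/
theorem keigher_prime_max_differential_ideal (A : Type*) [CommRing A] (d : A → A)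
    (hadd : ∀ a b : A, d (a + b) = d a + d b)
    (hmul : ∀ a b : A, d (a * b) = a * d b + b * d a)
    (hKeigher : ∀ J : Ideal A, (∀ a ∈ J, d a ∈ J) → ∀ a ∈ J.radical, d a ∈ J.radical)
    (I : Ideal A) (hI : ∀ a ∈ I, d a ∈ I)
    (S : Submonoid A) (hdisj : ∀ s ∈ S, s ∉ I) :
    ∃ p : Ideal A, p.IsPrime ∧ (∀ a ∈ p, d a ∈ p) ∧ I ≤ p ∧ (∀ s ∈ S, s ∉ p) ∧
      (∀ J : Ideal A, (∀ a ∈ J, d a ∈ J) → (∀ s ∈ S, s ∉ J) → p ≤ J → J = p) := by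
  have hd0 : d 0 = 0 := by
    have h := hadd 0 0
    simp only [add_zero] at h
    exact left_eq_add.mp h
  -- The family of differential ideals containing I and disjoint from S
  set T : Set (Ideal A) :=
    {J | (∀ a ∈ J, d a ∈ J) ∧ I ≤ J ∧ ∀ s ∈ S, s ∉ J} with hT
  obtain ⟨p, hIp, hpT, hmax'⟩ :=
    zorn_le_nonempty₀ T (fun c hcT hchain J hJc => by
      refine ⟨sSup c, ⟨?_, ?_, ?_⟩, fun z hz => le_sSup hz⟩
      · intro a ha
        rw [Submodule.mem_sSup_of_directed ⟨J, hJc⟩ hchain.directedOn] at ha ⊢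
        obtain ⟨K, hKc, haK⟩ := ha
        exact ⟨K, hKc, (hcT hKc).1 a haK⟩
      · exact (hcT hJc).2.1.trans (le_sSup hJc)
      · intro s hs hsS
        rw [Submodule.mem_sSup_of_directed ⟨J, hJc⟩ hchain.directedOn] at hsS
        obtain ⟨K, hKc, hsK⟩ := hsS
        exact (hcT hKc).2.2 s hs hsK)
      I ⟨hI, le_refl I, hdisj⟩
  have hmax : ∀ z ∈ T, p ≤ z → z = p := fun z hz hpz => le_antisymm (hmax' hz hpz) hpz
  obtain ⟨hpd, hIple, hpS⟩ := hpT
  -- p is radical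
  have hrad : p.radical = p := by
    refine hmax p.radical ⟨hKeigher p hpd, hIple.trans Ideal.le_radical, ?_⟩
      Ideal.le_radical
    intro s hs hsr
    obtain ⟨n, hn⟩ := Ideal.mem_radical_iff.mp hsr
    exact hpS (s ^ n) (pow_mem hs n) hn
  -- key lemma: if x*y ∈ p then x * d y ∈ p
  have hhalf : ∀ x y : A, x * y ∈ p → x * d y ∈ p := by
    intro x y hxy
    have h1 : x * d y + y * d x ∈ p := by
      have := hpd _ hxy
      rwa [hmul] at this
    have h2 : (x * d y) ^ 2 ∈ p := by
      have heq : (x * d y) ^ 2 =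
          (x * d y) * (x * d y + y * d x) - (x * y) * (d x * d y) := by ring
      rw [heq]
      exact sub_mem (p.mul_mem_left _ h1) (p.mul_mem_right _ hxy)
    rw [← hrad]
    exact Ideal.mem_radical_iff.mpr ⟨2, h2⟩
  -- derivatives span an ideal that, together with p, is differential
  have hspan : ∀ c : A, ∀ z ∈ Ideal.span (Set.range fun n => d^[n] c),
      d z ∈ Ideal.span (Set.range fun n => d^[n] c) := by
    intro c z hz
    induction hz using Submodule.span_induction with
    | mem t ht =>
      obtain ⟨n, rfl⟩ := ht
      exact Ideal.subset_span ⟨n + 1, by simp [Function.iterate_succ_apply']⟩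
    | zero => rw [hd0]; exact zero_mem _
    | add u v _ _ hu hv => rw [hadd]; exact add_mem hu hv
    | smul r u hu ihu =>
      have heq : d (r • u) = r * d u + u * d r := by
        simpa [smul_eq_mul] using hmul r u
      rw [heq]
      exact add_mem (Ideal.mul_mem_left _ _ ihu) (Ideal.mul_mem_right _ _ hu)
  have hJdiff : ∀ c : A, ∀ x ∈ p ⊔ Ideal.span (Set.range fun n => d^[n] c),
      d x ∈ p ⊔ Ideal.span (Set.range fun n => d^[n] c) := by
    intro c x hx
    rw [Submodule.mem_sup] at hx ⊢
    obtain ⟨y, hy, z, hz, rfl⟩ := hx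
    exact ⟨d y, hpd y hy, d z, hspan c z hz, (hadd y z).symm⟩
  have hprime : p.IsPrime := by
    constructor
    · intro htop
      exact hpS 1 S.one_mem (htop ▸ Submodule.mem_top)
    · intro a b hab
      by_contra hcon
      push_neg at hcon
      obtain ⟨ha, hb⟩ := hcon
      -- all products of iterated derivatives lie in p
      have hder : ∀ m n : ℕ, d^[m] a * d^[n] b ∈ p := by
        intro m
        induction m with
        | zero =>
          intro n
          induction n with
          | zero => simpa using hab
          | succ n ih =>
            rw [Function.iterate_succ_apply']
            exact hhalf _ _ ih
        | succ m ihm =>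
          intro n
          have h2 := hhalf (d^[n] b) (d^[m] a) (by rw [mul_comm]; exact ihm n)
          rw [Function.iterate_succ_apply']
          rwa [mul_comm] at h2
      set Ja := p ⊔ Ideal.span (Set.range fun n => d^[n] a) with hJa
      set Jb := p ⊔ Ideal.span (Set.range fun n => d^[n] b) with hJb
      -- Ja meets S
      have hmeet : ∀ c : A, c ∉ p → ∃ s ∈ S,
          s ∈ p ⊔ Ideal.span (Set.range fun n => d^[n] c) := by
        intro c hc
        by_contra hno
        push_neg at hno
        have hcmem : c ∈ p ⊔ Ideal.span (Set.range fun n => d^[n] c) :=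
          Submodule.mem_sup_right (Ideal.subset_span ⟨0, rfl⟩)
        have := hmax (p ⊔ Ideal.span (Set.range fun n => d^[n] c))
          ⟨hJdiff c, hIple.trans le_sup_left, hno⟩ le_sup_left
        rw [this] at hcmem
        exact hc hcmem
      obtain ⟨sa, hsaS, hsa⟩ := hmeet a ha
      obtain ⟨sb, hsbS, hsb⟩ := hmeet b hb
      -- products of the two ideals lie in p
      have hsp : Ideal.span (Set.range fun n => d^[n] a) *
          Ideal.span (Set.range fun n => d^[n] b) ≤ p := by
        rw [Ideal.span_mul_span']
        apply Ideal.span_le.mpr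
        rintro _ ⟨_, ⟨m, rfl⟩, _, ⟨n, rfl⟩, rfl⟩
        exact hder m n
      have hmul_mem : sa * sb ∈ p := by
        rw [Submodule.mem_sup] at hsa hsb
        obtain ⟨y1, hy1, z1, hz1, rfl⟩ := hsa
        obtain ⟨y2, hy2, z2, hz2, rfl⟩ := hsb
        have heq : (y1 + z1) * (y2 + z2) =
            y1 * (y2 + z2) + z1 * y2 + z1 * z2 := by ring
        rw [heq]
        exact add_mem (add_mem (p.mul_mem_right _ hy1) (p.mul_mem_left _ hy2))
          (hsp (Ideal.mul_mem_mul hz1 hz2))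
      exact hpS (sa * sb) (S.mul_mem hsaS hsbS) hmul_mem
  exact ⟨p, hprime, hpd, hIple, hpS,
    fun J hJd hJS hpJ => hmax J ⟨hJd, hIple.trans hpJ, hJS⟩ hpJ⟩
end

section
/- Let A be a differential ring and define the differential core of an ideal I as I♯ = {a ∈ I : ∂ⁿ(a) ∈ I for all n ≥ 0}. If A is a Keigher ring (the radical of every differential ideal is a differential ideal), then for every prime ideal p of A, the differential core p♯ is a prime differential ideal. -/
/-- In a Keigher ring, the differential core `p♯ = {a : ∀ n, ∂ⁿ a ∈ p}` of a
prime ideal `p` is a prime differential ideal. -/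
theorem keigher_differential_core_prime (A : Type*) [CommRing A] (d : A → A)
    (hadd : ∀ a b : A, d (a + b) = d a + d b)
    (hmul : ∀ a b : A, d (a * b) = a * d b + b * d a)
    (hKeigher : ∀ J : Ideal A, (∀ a ∈ J, d a ∈ J) → ∀ a ∈ J.radical, d a ∈ J.radical)
    (p : Ideal A) (hp : p.IsPrime) :
    ∃ q : Ideal A, (↑q = {a : A | ∀ n : ℕ, d^[n] a ∈ p}) ∧ q.IsPrime ∧
      ∀ a ∈ q, d a ∈ q := by
  have hd0 : d 0 = 0 := by
    have h := hadd 0 0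
    rw [add_zero] at h
    exact left_eq_add.mp h
  have hdn_add : ∀ (n : ℕ) (a b : A), d^[n] (a + b) = d^[n] a + d^[n] b := by
    intro n
    induction n with
    | zero => intro a b; simp
    | succ n ih =>
      intro a b
      simp only [Function.iterate_succ_apply]
      rw [hadd, ih]
  have hdn_zero : ∀ n : ℕ, d^[n] (0 : A) = 0 := by
    intro n
    induction n with
    | zero => simp
    | succ n ih => rw [Function.iterate_succ_apply, hd0, ih]
  -- closure under multiplication by arbitrary element
  have hsmul : ∀ (n : ℕ) (a : A), (∀ k : ℕ, d^[k] a ∈ p) → ∀ c : A, d^[n] (c * a) ∈ p := by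
    intro n
    induction n with
    | zero => intro a ha c; exact p.mul_mem_left c (ha 0)
    | succ n ih =>
      intro a ha c
      rw [Function.iterate_succ_apply, hmul, hdn_add]
      have hda : ∀ k : ℕ, d^[k] (d a) ∈ p := fun k => by
        rw [← Function.iterate_succ_apply]; exact ha (k + 1)
      refine p.add_mem (ih (d a) hda c) ?_
      rw [mul_comm a (d c)]
      exact ih a ha (d c)
  let q : Ideal A :=
    { carrier := {a : A | ∀ n : ℕ, d^[n] a ∈ p}
      add_mem' := fun {a b} ha hb n => by
        rw [hdn_add]; exact p.add_mem (ha n) (hb n)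
      zero_mem' := fun n => by rw [hdn_zero]; exact p.zero_mem
      smul_mem' := fun c a ha n => by
        simpa [smul_eq_mul] using hsmul n a ha c }
  have hqmem : ∀ a : A, a ∈ q ↔ ∀ n : ℕ, d^[n] a ∈ p := fun a => Iff.rfl
  have hqdiff : ∀ a ∈ q, d a ∈ q := by
    intro a ha n
    rw [← Function.iterate_succ_apply]
    exact ha (n + 1)
  refine ⟨q, rfl, ?_, hqdiff⟩
  have hqp : q ≤ p := fun a ha => ha 0
  set R := q.radical with hR
  have hRdiff : ∀ a ∈ R, d a ∈ R := hKeigher q hqdiff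
  have hRp : R ≤ p := by
    have h := Ideal.radical_mono hqp
    rwa [hp.radical] at h
  have hRrad : ∀ z : A, z * z ∈ R → z ∈ R := by
    intro z hz
    have h : z ∈ R.radical := ⟨2, by rwa [pow_two]⟩
    rwa [hR, Ideal.radical_idem] at h
  -- if x*y ∈ R then x * d y ∈ R
  have hstep : ∀ x y : A, x * y ∈ R → x * d y ∈ R := by
    intro x y hxy
    apply hRrad
    have hd : d (x * y) ∈ R := hRdiff _ hxy
    have heq : (x * d y) * (x * d y) = (x * d y) * d (x * y) - (x * y) * (d x * d y) := by
      rw [hmul]; ring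
    rw [heq]
    exact R.sub_mem (R.mul_mem_left _ hd) (R.mul_mem_right _ hxy)
  constructor
  · intro htop
    have h1 : (1 : A) ∈ q := htop ▸ Submodule.mem_top
    exact hp.ne_top ((Ideal.eq_top_iff_one p).mpr (h1 0))
  · intro a b hab
    by_contra hcon
    push_neg at hcon
    obtain ⟨ha, hb⟩ := hcon
    obtain ⟨m, hm⟩ := not_forall.mp ha
    obtain ⟨n, hn⟩ := not_forall.mp hb
    have key : ∀ i j : ℕ, d^[i] a * d^[j] b ∈ R := by
      intro i
      induction i with
      | zero =>
        intro j
        induction j with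
        | zero => exact Ideal.le_radical hab
        | succ j ihj =>
          rw [Function.iterate_succ_apply']
          exact hstep _ _ ihj
      | succ i ihi =>
        intro j
        rw [Function.iterate_succ_apply']
        have h := hstep (d^[j] b) (d^[i] a) (by rw [mul_comm]; exact ihi j)
        rwa [mul_comm]
    have hmem := hRp (key m n)
    rcases hp.mem_or_mem hmem with h | h
    · exact hm h
    · exact hn h
end

section
/- If A is a Keigher ring and I is a differential ideal, then the quotient differential ring A/I is a Keigher ring. -/
/-- If `A` is a Keigher ring and `I` a differential ideal, then the quotient
differential ring `A ⧸ I` is a Keigher ring. -/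
theorem keigher_quotient (A : Type*) [CommRing A] (d : A → A)
    (hadd : ∀ a b : A, d (a + b) = d a + d b)
    (hmul : ∀ a b : A, d (a * b) = a * d b + b * d a)
    (hKeigher : ∀ J : Ideal A, (∀ a ∈ J, d a ∈ J) → ∀ a ∈ J.radical, d a ∈ J.radical)
    (I : Ideal A) (hI : ∀ a ∈ I, d a ∈ I)
    (D : A ⧸ I → A ⧸ I)
    (hD : ∀ a : A, D (Ideal.Quotient.mk I a) = Ideal.Quotient.mk I (d a)) :
    ∀ J : Ideal (A ⧸ I), (∀ x ∈ J, D x ∈ J) → ∀ x ∈ J.radical, D x ∈ J.radical := by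
  intro J hJ x hx
  obtain ⟨a, rfl⟩ := Ideal.Quotient.mk_surjective x
  set J' : Ideal A := J.comap (Ideal.Quotient.mk I) with hJ'
  have hJ'diff : ∀ a ∈ J', d a ∈ J' := by
    intro a ha
    have := hJ _ ha
    rwa [hD] at this
  have hrad : J'.radical = J.radical.comap (Ideal.Quotient.mk I) := by
    ext b
    simp only [Ideal.mem_radical_iff, Ideal.mem_comap, map_pow, hJ']
  have ha : a ∈ J'.radical := by
    rw [hrad]; exact hx
  have := hKeigher J' hJ'diff a ha
  rw [hrad, Ideal.mem_comap] at this
  rw [hD]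
  exact this
end

section
/- If A is a Keigher ring and S ⊆ A is a multiplicative subset, then the localization S⁻¹A, with the induced derivation ∂(a/s) = (∂a·s − a·∂s)/s², is a Keigher ring. -/
/-- If `A` is a Keigher ring and `S ⊆ A` a multiplicative subset, then the
localization `S⁻¹A`, with the induced derivation, is a Keigher ring. -/
theorem keigher_localization (A : Type*) [CommRing A] (d : A → A)
    (hadd : ∀ a b : A, d (a + b) = d a + d b)
    (hmul : ∀ a b : A, d (a * b) = a * d b + b * d a)
    (hKeigher : ∀ J : Ideal A, (∀ a ∈ J, d a ∈ J) → ∀ a ∈ J.radical, d a ∈ J.radical)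
    (S : Submonoid A)
    (D : Localization S → Localization S)
    (hDadd : ∀ x y : Localization S, D (x + y) = D x + D y)
    (hDmul : ∀ x y : Localization S, D (x * y) = x * D y + y * D x)
    (hDcompat : ∀ a : A, D (algebraMap A (Localization S) a)
        = algebraMap A (Localization S) (d a)) :
    ∀ J : Ideal (Localization S), (∀ x ∈ J, D x ∈ J) →
      ∀ x ∈ J.radical, D x ∈ J.radical := by
  intro J hJ x hx
  set φ : A →+* Localization S := algebraMap A (Localization S) with hφ
  obtain ⟨⟨a, s⟩, hmk⟩ := IsLocalization.mk'_surjective S x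
  have hs : φ s * x = φ a := by
    rw [← hmk, mul_comm]; exact IsLocalization.mk'_spec _ a s
  -- the contracted ideal
  set I : Ideal A := J.comap φ with hI
  have hIdiff : ∀ b ∈ I, d b ∈ I := by
    intro b hb
    simp only [hI, Ideal.mem_comap] at hb ⊢
    rw [← hDcompat b]
    exact hJ _ hb
  -- a ∈ I.radical
  have haI : a ∈ I.radical := by
    obtain ⟨n, hn⟩ := hx
    refine ⟨n, ?_⟩
    simp only [hI, Ideal.mem_comap, map_pow]
    rw [← hs, mul_pow]
    exact Ideal.mul_mem_left _ _ hn
  have hda : d a ∈ I.radical := hKeigher I hIdiff a haI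
  have hφda : φ (d a) ∈ J.radical := by
    obtain ⟨m, hm⟩ := hda
    exact ⟨m, by rw [← map_pow]; exact hm⟩
  -- D (φ a) = φ s * D x + x * D (φ s)
  have hDfa : φ (d a) = φ s * D x + x * D (φ s) := by
    rw [← hDcompat a, ← hs, hDmul]
  have hsDx : φ s * D x ∈ J.radical := by
    have h1 : x * D (φ s) ∈ J.radical := Ideal.mul_mem_right _ _ hx
    have h2 : φ s * D x = φ (d a) - x * D (φ s) := by rw [hDfa]; ring
    rw [h2]
    exact Ideal.sub_mem _ hφda h1
  obtain ⟨k, hk⟩ := hsDx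
  have hu : IsUnit ((φ s) ^ k) := (IsLocalization.map_units (Localization S) s).pow k
  refine ⟨k, ?_⟩
  have : (D x) ^ k = ↑hu.unit⁻¹ * ((φ s * D x) ^ k) := by
    rw [mul_pow, ← mul_assoc, IsUnit.val_inv_mul, one_mul]
  rw [this]
  exact Ideal.mul_mem_left _ _ hk
end

section
/- In a Keigher ring, every minimal prime ideal is a differential ideal. -/
/-- In a Keigher ring, every minimal prime ideal is a differential ideal. -/
theorem keigher_minimal_prime_differential (A : Type*) [CommRing A] (d : A → A)
    (hadd : ∀ a b : A, d (a + b) = d a + d b)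
    (hmul : ∀ a b : A, d (a * b) = a * d b + b * d a)
    (hKeigher : ∀ J : Ideal A, (∀ a ∈ J, d a ∈ J) → ∀ a ∈ J.radical, d a ∈ J.radical)
    (p : Ideal A) (hp : p ∈ minimalPrimes A) :
    ∀ a ∈ p, d a ∈ p := by
  intro a ha
  haveI hpP : p.IsPrime := hp.1.1
  have hd0 : d 0 = 0 := by
    have := hmul 0 0
    simpa using this
  -- a is nilpotent in the localization at p
  have hnil : IsNilpotent (algebraMap A (Localization p.primeCompl) a) := by
    haveI := Ring.KrullDimLE.of_isLocalization p hp (Localization p.primeCompl)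
    rw [Ring.KrullDimLE.isNilpotent_iff_mem_maximalIdeal]
    exact (IsLocalization.AtPrime.to_map_mem_maximal_iff _ p a).mpr ha
  obtain ⟨n, hn⟩ := hnil
  rw [← map_pow, IsLocalization.map_eq_zero_iff p.primeCompl] at hn
  obtain ⟨⟨s, hs⟩, hsa⟩ := hn
  -- the s-torsion ideal
  set J : Ideal A :=
    { carrier := {x | ∃ m : ℕ, s ^ m * x = 0}
      add_mem' := by
        rintro x y ⟨m, hm⟩ ⟨k, hk⟩
        refine ⟨m + k, ?_⟩
        rw [mul_add]
        calc s ^ (m + k) * x + s ^ (m + k) * y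
            = s ^ k * (s ^ m * x) + s ^ m * (s ^ k * y) := by ring
          _ = 0 := by rw [hm, hk]; ring
      zero_mem' := ⟨0, by ring⟩
      smul_mem' := by
        rintro c x ⟨m, hm⟩
        exact ⟨m, by rw [smul_eq_mul, ← mul_assoc, mul_comm _ c, mul_assoc, hm, mul_zero]⟩ }
  have hJdiff : ∀ x ∈ J, d x ∈ J := by
    rintro x ⟨m, hm⟩
    refine ⟨2 * m, ?_⟩
    have h1 : d (s ^ m * x) = 0 := by rw [hm, hd0]
    rw [hmul] at h1
    have h2 : s ^ m * (s ^ m * d x + x * d (s ^ m)) = s ^ m * 0 := by rw [h1]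
    calc s ^ (2 * m) * d x
        = s ^ m * (s ^ m * d x + x * d (s ^ m)) - (s ^ m * x) * d (s ^ m) := by ring
      _ = 0 := by rw [h2, hm]; ring
  have haJ : a ∈ J.radical := ⟨n, ⟨1, by simpa using hsa⟩⟩
  obtain ⟨k, m, hk⟩ := hKeigher J hJdiff a haJ
  -- s ^ m * (d a) ^ k = 0 ∈ p, and s ^ m ∉ p
  have : s ^ m * d a ^ k ∈ p := by rw [hk]; exact p.zero_mem
  have hsm : s ^ m ∉ p := fun h => hs (hpP.mem_of_pow_mem m h)
  have hdk : d a ^ k ∈ p := (hpP.mem_or_mem this).resolve_left hsm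
  exact hpP.mem_of_pow_mem k hdk
end
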